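/- Freyd's compactness theorem: let C be a Cpo⊥-category such that every Cpo-endofunctor of C has an initial algebra. Then C is Cpo-algebraically compact; explicitly, for every Cpo-endofunctor F : C ⥤ C, if (A, a : F.obj A ⟶ A) is an initial F-algebra then a is an isomorphism and the coalgebra (A, a⁻¹ : A ⟶ F.obj A) is a terminal F-coalgebra. -/

import Mathlib

open CategoryTheory OmegaCompletePartialOrder Limits

universe v u

/-- A `Cpo`-category: a category whose hom-sets carry an ω-complete partial
order such that composition is monotone and ω-continuous in each argument. -/
class CpoCategory (C : Type u) [Category.{v} C]
    [∀ X Y : C, OmegaCompletePartialOrder (X ⟶ Y)] : Prop where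
  comp_le_comp : ∀ {X Y Z : C} {f f' : X ⟶ Y} {g g' : Y ⟶ Z},
      f ≤ f' → g ≤ g' → f ≫ g ≤ f' ≫ g'
  ωSup_comp : ∀ {X Y Z : C} (c : Chain (X ⟶ Y)) (g : Y ⟶ Z),
      ωSup c ≫ g = ωSup (c.map ⟨fun f => f ≫ g, fun _ _ h => comp_le_comp h le_rfl⟩)
  comp_ωSup : ∀ {X Y Z : C} (f : X ⟶ Y) (c : Chain (Y ⟶ Z)),
      f ≫ ωSup c = ωSup (c.map ⟨fun g => f ≫ g, fun _ _ h => comp_le_comp le_rfl h⟩)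

/-- A `Cpo⊥`-category: a `Cpo`-category whose hom-sets have least elements and
whose composition is strict in each argument. -/
class CpoBotCategory (C : Type u) [Category.{v} C]
    [∀ X Y : C, OmegaCompletePartialOrder (X ⟶ Y)]
    [∀ X Y : C, OrderBot (X ⟶ Y)] extends CpoCategory C : Prop where
  bot_comp : ∀ {X Y Z : C} (g : Y ⟶ Z), (⊥ : X ⟶ Y) ≫ g = (⊥ : X ⟶ Z)
  comp_bot : ∀ {X Y Z : C} (f : X ⟶ Y), f ≫ (⊥ : Y ⟶ Z) = (⊥ : X ⟶ Z)

/-- A `Cpo`-functor: a functor between `Cpo`-categories whose action on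
hom-sets is monotone and preserves suprema of ω-chains. -/
def IsCpoFunctor {C : Type u} {D : Type u} [Category.{v} C] [Category.{v} D]
    [∀ X Y : C, OmegaCompletePartialOrder (X ⟶ Y)]
    [∀ X Y : D, OmegaCompletePartialOrder (X ⟶ Y)] (F : C ⥤ D) : Prop :=
  ∀ (X Y : C), ∃ hm : Monotone (fun f : X ⟶ Y => F.map f),
    ∀ c : Chain (X ⟶ Y), F.map (ωSup c) = ωSup (c.map ⟨fun f => F.map f, hm⟩)

namespace FreydAux

lemma ωSup_eq_ωSup {α : Type*} [OmegaCompletePartialOrder α] {c₁ c₂ : Chain α}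
    (h : ∀ n, c₁ n = c₂ n) : ωSup c₁ = ωSup c₂ := by
  congr 1; exact Chain.ext (funext h)

def iterChain {α : Type*} [OmegaCompletePartialOrder α] [OrderBot α] (f : α →o α) : Chain α :=
  ⟨fun n => f^[n] ⊥, monotone_nat_of_le_succ (fun n => by
    induction n with
    | zero => exact bot_le
    | succ n ih =>
      rw [Function.iterate_succ_apply', Function.iterate_succ_apply']
      exact f.monotone ih)⟩

def lfp {α : Type*} [OmegaCompletePartialOrder α] [OrderBot α] (f : α →o α) : α :=
  ωSup (iterChain f)

lemma lfp_fixed {α : Type*} [OmegaCompletePartialOrder α] [OrderBot α] (f : α →o α)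
    (hf : ∀ c : Chain α, f (ωSup c) = ωSup (c.map f)) : f (lfp f) = lfp f := by
  rw [lfp, hf]
  apply le_antisymm
  · apply ωSup_le; intro n
    have h1 : ((iterChain f).map f) n = f^[n+1] ⊥ := (Function.iterate_succ_apply' f n ⊥).symm
    rw [h1]; exact le_ωSup (iterChain f) (n+1)
  · apply ωSup_le; intro n
    calc iterChain f n ≤ iterChain f (n+1) := (iterChain f).monotone (Nat.le_succ n)
    _ = ((iterChain f).map f) n := Function.iterate_succ_apply' f n ⊥
    _ ≤ _ := le_ωSup _ n

variable {C : Type u} [Category.{v} C] [∀ X Y : C, OmegaCompletePartialOrder (X ⟶ Y)]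
  [CpoCategory C]

def theta {F : C ⥤ C} (hF : IsCpoFunctor F) {V W : C}
    (u : V ⟶ F.obj V) (v : F.obj W ⟶ W) : (V ⟶ W) →o (V ⟶ W) :=
  ⟨fun g => u ≫ F.map g ≫ v, fun g g' h =>
    CpoCategory.comp_le_comp le_rfl (CpoCategory.comp_le_comp ((hF V W).choose h) le_rfl)⟩

lemma theta_cont {F : C ⥤ C} (hF : IsCpoFunctor F) {V W : C}
    (u : V ⟶ F.obj V) (v : F.obj W ⟶ W) (c : Chain (V ⟶ W)) :
    theta hF u v (ωSup c) = ωSup (c.map (theta hF u v)) := by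
  show u ≫ F.map (ωSup c) ≫ v = _
  rw [(hF V W).choose_spec c, CpoCategory.ωSup_comp, CpoCategory.comp_ωSup]
  exact ωSup_eq_ωSup (fun n => rfl)

end FreydAux

/-- Freyd's compactness theorem: a `Cpo⊥`-category in which every
`Cpo`-endofunctor has an initial algebra is `Cpo`-algebraically compact: the
structure map of any initial algebra of a `Cpo`-endofunctor is an isomorphism
whose inverse makes the carrier a terminal coalgebra. -/
theorem freyd_compactness
    {C : Type u} [Category.{v} C] [∀ X Y : C, OmegaCompletePartialOrder (X ⟶ Y)]
    [∀ X Y : C, OrderBot (X ⟶ Y)] [CpoBotCategory C]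
    (hcomplete : ∀ F : C ⥤ C, IsCpoFunctor F →
        ∃ A : Endofunctor.Algebra F, Nonempty (IsInitial A))
    (F : C ⥤ C) (hF : IsCpoFunctor F)
    (A : Endofunctor.Algebra F) (hA : IsInitial A) :
    ∃ b : A.a ⟶ F.obj A.a, A.str ≫ b = 𝟙 (F.obj A.a) ∧ b ≫ A.str = 𝟙 A.a ∧
      Nonempty (IsTerminal (⟨A.a, b⟩ : Endofunctor.Coalgebra F)) := by
  classical
  set b : A.a ⟶ F.obj A.a := Endofunctor.Algebra.Initial.strInv hA with hb
  have hab : A.str ≫ b = 𝟙 (F.obj A.a) := Endofunctor.Algebra.Initial.right_inv hA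
  have hba : b ≫ A.str = 𝟙 A.a := Endofunctor.Algebra.Initial.left_inv hA
  -- the least fixed point e of ψ(e) = b ≫ F e ≫ a is the identity
  set ψ : (A.a ⟶ A.a) →o (A.a ⟶ A.a) := FreydAux.theta hF b A.str with hψ
  set e : A.a ⟶ A.a := FreydAux.lfp ψ with hedef
  have he' : b ≫ F.map e ≫ A.str = e := FreydAux.lfp_fixed ψ (FreydAux.theta_cont hF b A.str)
  have healg : F.map e ≫ A.str = A.str ≫ e := by
    conv_rhs => rw [← he', ← Category.assoc, hab, Category.id_comp]
  have he_id : e = 𝟙 A.a := by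
    have h1 : (⟨e, healg⟩ : Endofunctor.Algebra.Hom A A) =
        (⟨𝟙 A.a, by simp⟩ : Endofunctor.Algebra.Hom A A) := hA.hom_ext _ _
    exact congrArg Endofunctor.Algebra.Hom.f h1
  refine ⟨b, hab, hba, ⟨IsTerminal.ofUniqueHom (fun X => ?hom) (fun X m => ?uniq)⟩⟩
  case hom =>
    -- the least fixed point of Φ(g) = x ≫ F g ≫ a is a coalgebra morphism
    have hfix : X.str ≫ F.map (FreydAux.lfp (FreydAux.theta hF X.str A.str)) ≫ A.str =
        FreydAux.lfp (FreydAux.theta hF X.str A.str) :=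
      FreydAux.lfp_fixed _ (FreydAux.theta_cont hF X.str A.str)
    refine ⟨FreydAux.lfp (FreydAux.theta hF X.str A.str), ?_⟩
    conv_rhs => rw [← hfix]
    rw [Category.assoc, Category.assoc, hab, Category.comp_id]
  case uniq =>
    apply Endofunctor.Coalgebra.Hom.ext
    have mh := m.h
    have key : ∀ n, m.f ≫ ψ^[n] ⊥ = (FreydAux.theta hF X.str A.str)^[n] ⊥ := by
      intro n
      induction n with
      | zero => exact CpoBotCategory.comp_bot m.f
      | succ n ih =>
        rw [Function.iterate_succ_apply', Function.iterate_succ_apply']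
        show m.f ≫ b ≫ F.map (ψ^[n] ⊥) ≫ A.str
            = X.str ≫ F.map ((FreydAux.theta hF X.str A.str)^[n] ⊥) ≫ A.str
        rw [← ih, F.map_comp]
        simp only [← Category.assoc]
        rw [mh]
    show m.f = _
    calc m.f = m.f ≫ 𝟙 A.a := (Category.comp_id _).symm
      _ = m.f ≫ FreydAux.lfp ψ := by rw [← he_id]
      _ = ωSup ((FreydAux.iterChain ψ).map
            ⟨fun g => m.f ≫ g, fun _ _ h => CpoCategory.comp_le_comp le_rfl h⟩) :=
          CpoCategory.comp_ωSup _ _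
      _ = ωSup (FreydAux.iterChain (FreydAux.theta hF X.str A.str)) :=
          FreydAux.ωSup_eq_ωSup (fun n => key n)
      _ = FreydAux.lfp (FreydAux.theta hF X.str A.str) := rfl
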